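/- Let (X, 𝔸, d) be a complete C*-algebra-valued b-metric space with coefficient A, endowed with a directed graph G with V(G) = X whose edge set contains all loops, and let f : X → X satisfy d(fx, fy) ⪯ B* d(x, y) B for all x, y ∈ X with (x, y) ∈ E(G̃), where B ∈ 𝔸 and ‖A‖·‖B‖² < 1. Suppose (X, 𝔸, d, G) has property (P3). Then: (i) if C_f ≠ ∅, then f has a fixed point in X; (ii) if moreover the graph G has property (P4), then f has a unique fixed point in X. -/

import Mathlib

set_option maxHeartbeats 1600000 in
/-- **Corollary 3.4.** Let `(X, 𝔸, d)` be a complete `C*`-algebra-valued `b`-metric space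
with coefficient `A`, endowed with a graph `G` (edge relation `E` containing all loops),
and let `f : X → X` satisfy `d (f x) (f y) ⪯ B* ⬝ d x y ⬝ B` whenever `(x, y)` is an edge
of the symmetrized graph `G̃`, with `‖A‖ ⬝ ‖B‖² < 1`.  Suppose property (P3) holds.  Then:
(i) if `C_f ≠ ∅` then `f` has a fixed point;
(ii) if moreover property (P4) holds then `f` has a unique fixed point. -/
theorem fixed_point_of_cstar_bmetric_graph_contraction
    {X : Type*} {𝔸 : Type*} [CStarAlgebra 𝔸] [PartialOrder 𝔸] [StarOrderedRing 𝔸]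
    (d : X → X → 𝔸) (A : 𝔸)
    (hA_pos : 0 ≤ A) (hA_one : (1 : 𝔸) ≤ A)
    (hd_nonneg : ∀ x y, 0 ≤ d x y)
    (hd_eq_zero : ∀ x y, d x y = 0 ↔ x = y)
    (hd_symm : ∀ x y, d x y = d y x)
    (hd_triangle : ∀ x y z, d x y ≤ A * (d x z + d z y))
    -- `X` is complete
    (hcomplete : ∀ s : ℕ → X,
      (∀ ε : ℝ, 0 < ε → ∃ N, ∀ m ≥ N, ∀ n ≥ N, ‖d (s m) (s n)‖ < ε) →
      ∃ p, Filter.Tendsto (fun n => ‖d (s n) p‖) Filter.atTop (nhds 0))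
    (E : X → X → Prop) (hE_refl : ∀ x, E x x)
    (f : X → X) (B : 𝔸)
    (hcontr : ∀ x y, (E x y ∨ E y x) → d (f x) (f y) ≤ star B * d x y * B)
    (hnorm : ‖A‖ * ‖B‖ ^ 2 < 1)
    -- property (P3)
    (hP3 : ∀ (s : ℕ → X) (p : X),
      Filter.Tendsto (fun n => ‖d (s n) p‖) Filter.atTop (nhds 0) →
      (∀ n, E (s (n + 1)) (s n) ∨ E (s n) (s (n + 1))) →
      ∃ φ : ℕ → ℕ, StrictMono φ ∧ ∀ i, E (s (φ i)) p ∨ E p (s (φ i)))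
    -- `C_f ≠ ∅`
    (hC : ∃ x : X, ∀ m n : ℕ, E (f^[n] x) (f^[m] x) ∨ E (f^[m] x) (f^[n] x)) :
    (∃ x, f x = x) ∧
    -- property (P4) gives uniqueness of the fixed point
    ((∀ x y, f x = x → f y = y → (E x y ∨ E y x)) → ∃! x, f x = x) := by
  classical
  by_cases hX : ∀ x y : X, x = y
  · obtain ⟨x₀, -⟩ := hC
    exact ⟨⟨x₀, hX _ _⟩, fun _ => ⟨x₀, hX _ _, fun y _ => hX y x₀⟩⟩
  push_neg at hX
  obtain ⟨u, v, huv⟩ := hX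
  have hduv : d u v ≠ 0 := fun h => huv ((hd_eq_zero u v).mp h)
  have : Nontrivial 𝔸 := nontrivial_of_ne _ _ hduv
  set s : ℝ := ‖A‖ with hs_def
  set k : ℝ := ‖B‖ ^ 2 with hk_def
  have hk0 : 0 ≤ k := sq_nonneg _
  have nm : ∀ a b : 𝔸, 0 ≤ a → a ≤ b → ‖a‖ ≤ ‖b‖ := fun a b ha hab =>
    CStarAlgebra.norm_le_norm_of_nonneg_of_le ha hab
  have hs1 : (1 : ℝ) ≤ s := by
    have h2 := nm 1 A zero_le_one hA_one
    simpa [norm_one] using h2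
  have hsk : s * k < 1 := hnorm
  have hk1 : k < 1 := lt_of_le_of_lt (le_mul_of_one_le_left hk0 hs1) hsk
  have hs0 : (0:ℝ) < s := lt_of_lt_of_le one_pos hs1
  have tri : ∀ x y z, ‖d x y‖ ≤ s * (‖d x z‖ + ‖d z y‖) := by
    intro x y z
    calc ‖d x y‖ ≤ ‖A * (d x z + d z y)‖ := nm _ _ (hd_nonneg _ _) (hd_triangle x y z)
      _ ≤ ‖A‖ * ‖d x z + d z y‖ := norm_mul_le _ _
      _ ≤ s * (‖d x z‖ + ‖d z y‖) :=
          mul_le_mul_of_nonneg_left (norm_add_le _ _) (norm_nonneg A)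
  have contr : ∀ x y, (E x y ∨ E y x) → ‖d (f x) (f y)‖ ≤ k * ‖d x y‖ := by
    intro x y h
    calc ‖d (f x) (f y)‖ ≤ ‖star B * d x y * B‖ := nm _ _ (hd_nonneg _ _) (hcontr x y h)
      _ ≤ ‖star B * d x y‖ * ‖B‖ := norm_mul_le _ _
      _ ≤ (‖star B‖ * ‖d x y‖) * ‖B‖ :=
          mul_le_mul_of_nonneg_right (norm_mul_le _ _) (norm_nonneg B)
      _ = k * ‖d x y‖ := by rw [norm_star, hk_def]; ring
  obtain ⟨x₀, hx₀⟩ := hC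
  set g : ℕ → X := fun n => f^[n] x₀ with hg
  have hgsucc : ∀ n, g (n + 1) = f (g n) := fun n => Function.iterate_succ_apply' f n x₀
  have edges : ∀ m n, E (g n) (g m) ∨ E (g m) (g n) := fun m n => hx₀ m n
  set D₀ : ℝ := ‖d (g 0) (g 1)‖ with hD₀
  have hD0 : 0 ≤ D₀ := norm_nonneg _
  have step : ∀ n, ‖d (g n) (g (n + 1))‖ ≤ k ^ n * D₀ := by
    intro n; induction n with
    | zero => simp [hD₀]
    | succ n ih =>
      have h1 := contr (g n) (g (n + 1)) (edges (n + 1) n)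
      rw [← hgsucc n] at h1
      rw [← hgsucc (n + 1)] at h1
      calc ‖d (g (n + 1)) (g (n + 1 + 1))‖ ≤ k * ‖d (g n) (g (n + 1))‖ := h1
        _ ≤ k * (k ^ n * D₀) := mul_le_mul_of_nonneg_left ih hk0
        _ = k ^ (n + 1) * D₀ := by ring
  have hden : (0:ℝ) < 1 - s * k := by linarith
  set C : ℝ := s * D₀ / (1 - s * k) with hC_def
  have hC_eq : C * (1 - s * k) = s * D₀ := div_mul_cancel₀ _ hden.ne'
  have hC_nonneg : 0 ≤ C := div_nonneg (mul_nonneg hs0.le hD0) hden.le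
  have hD0C : D₀ ≤ C := by
    rw [hC_def, le_div_iff₀ hden]
    nlinarith [mul_nonneg hD0 (mul_nonneg hs0.le hk0), mul_le_mul_of_nonneg_left hs1 hD0]
  have key : ∀ p n, ‖d (g n) (g (n + p + 1))‖ ≤ C * k ^ n := by
    intro p; induction p with
    | zero =>
      intro n
      have h := step n
      have h2 : k ^ n * D₀ ≤ C * k ^ n := by
        rw [mul_comm C (k ^ n)]
        exact mul_le_mul_of_nonneg_left hD0C (pow_nonneg hk0 n)
      simpa using h.trans h2
    | succ p ih =>
      intro n
      have t := tri (g n) (g (n + (p + 1) + 1)) (g (n + 1))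
      have h1 := step n
      have h2 := ih (n + 1)
      rw [show n + 1 + p + 1 = n + (p + 1) + 1 by omega] at h2
      have hmain : s * D₀ + s * (C * k) ≤ C := by nlinarith [hC_eq]
      calc ‖d (g n) (g (n + (p + 1) + 1))‖
          ≤ s * (‖d (g n) (g (n + 1))‖ + ‖d (g (n + 1)) (g (n + (p + 1) + 1))‖) := t
        _ ≤ s * (k ^ n * D₀ + C * k ^ (n + 1)) :=
            mul_le_mul_of_nonneg_left (add_le_add h1 h2) hs0.le
        _ = (s * D₀ + s * (C * k)) * k ^ n := by ring
        _ ≤ C * k ^ n := mul_le_mul_of_nonneg_right hmain (pow_nonneg hk0 n)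
  have hCk : Filter.Tendsto (fun n => C * k ^ n) Filter.atTop (nhds 0) := by
    simpa using (tendsto_pow_atTop_nhds_zero_of_lt_one hk0 hk1).const_mul C
  have hcauchy : ∀ ε : ℝ, 0 < ε → ∃ N, ∀ m ≥ N, ∀ n ≥ N, ‖d (g m) (g n)‖ < ε := by
    intro ε hε
    obtain ⟨N, hN⟩ := Filter.eventually_atTop.mp (hCk.eventually (gt_mem_nhds hε))
    refine ⟨N, fun m hm n hn => ?_⟩
    rcases lt_trichotomy m n with h | h | h
    · have hk2 := key (n - m - 1) m
      rw [show m + (n - m - 1) + 1 = n by omega] at hk2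
      exact lt_of_le_of_lt hk2 (hN m hm)
    · rw [h, (hd_eq_zero _ _).mpr rfl]
      simpa using hε
    · have hk2 := key (m - n - 1) n
      rw [show n + (m - n - 1) + 1 = m by omega] at hk2
      rw [hd_symm]
      exact lt_of_le_of_lt hk2 (hN n hn)
  obtain ⟨p, htend⟩ := hcomplete g hcauchy
  have hedges : ∀ n, E (g (n + 1)) (g n) ∨ E (g n) (g (n + 1)) := fun n => edges n (n + 1)
  obtain ⟨φ, hφ_mono, hφ_edge⟩ := hP3 g p htend hedges
  have hφ_top : Filter.Tendsto φ Filter.atTop Filter.atTop := hφ_mono.tendsto_atTop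
  have t1 : Filter.Tendsto (fun i => ‖d (g (φ i)) p‖) Filter.atTop (nhds 0) :=
    htend.comp hφ_top
  have t2 : Filter.Tendsto (fun i => ‖d (g (φ i + 1)) p‖) Filter.atTop (nhds 0) :=
    htend.comp (Filter.tendsto_atTop_mono (fun i => Nat.le_succ (φ i)) hφ_top)
  have hbound : ∀ i, ‖d p (f p)‖ ≤ s * (‖d (g (φ i + 1)) p‖ + k * ‖d (g (φ i)) p‖) := by
    intro i
    have h1 := contr (g (φ i)) p (hφ_edge i)
    rw [← hgsucc (φ i)] at h1
    have t := tri p (f p) (g (φ i + 1))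
    have hsym : ‖d p (g (φ i + 1))‖ = ‖d (g (φ i + 1)) p‖ := by rw [hd_symm]
    calc ‖d p (f p)‖ ≤ s * (‖d p (g (φ i + 1))‖ + ‖d (g (φ i + 1)) (f p)‖) := t
      _ ≤ s * (‖d (g (φ i + 1)) p‖ + k * ‖d (g (φ i)) p‖) := by
          rw [hsym]
          exact mul_le_mul_of_nonneg_left (add_le_add le_rfl h1) hs0.le
  have hlim : Filter.Tendsto (fun i => s * (‖d (g (φ i + 1)) p‖ + k * ‖d (g (φ i)) p‖))
      Filter.atTop (nhds 0) := by
    have := (t2.add (t1.const_mul k)).const_mul s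
    simpa using this
  have hle : ‖d p (f p)‖ ≤ 0 := ge_of_tendsto' hlim hbound
  have hdpf : d p (f p) = 0 := norm_eq_zero.mp (le_antisymm hle (norm_nonneg _))
  have hfp : f p = p := ((hd_eq_zero p (f p)).mp hdpf).symm
  refine ⟨⟨p, hfp⟩, fun hP4 => ⟨p, hfp, fun y hy => ?_⟩⟩
  have h1 := contr y p (hP4 y p hy hfp)
  rw [hy, hfp] at h1
  have h0 : ‖d y p‖ ≤ 0 := by nlinarith [norm_nonneg (d y p)]
  exact (hd_eq_zero y p).mp (norm_eq_zero.mp (le_antisymm h0 (norm_nonneg _)))
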